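/- arXiv:1304.7198 — 2 statements merged into one kernel-verified Lean document; each statement's English description precedes it below -/
import Mathlib

section
/- Let I ≥ 2 be an integer and S > 0 a real number. Define χ : [0,1) → ℝ by χ(ρ) = ((1+(I−1)ρ)(1−ρ)^{I−1})^{−1/2} · exp(−I·S·ρ/(2(1−ρ))), and when S < (√I−1)/(√I+1) set ρ̂ = (1/2)(1−S)·(1 + √(1 − 4S/((I−1)(1−S)²))). Then: if S ≥ (√I−1)/(√I+1), the supremum of χ(ρ) over ρ ∈ (0,1) equals 1; and if S < (√I−1)/(√I+1), then ρ̂ ∈ (0,1) and the supremum of χ(ρ) over ρ ∈ (0,1) equals max{χ(ρ̂), 1}. -/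
open Real Set
set_option maxHeartbeats 800000

/-- The likelihood ratio factor `χ(ρ)` for an ANOVA study with `I` cells and
normalized within-group sum of squares `S`. -/
noncomputable def chiFun (I : ℕ) (S ρ : ℝ) : ℝ :=
  ((1 + ((I : ℝ) - 1) * ρ) * (1 - ρ) ^ (I - 1)) ^ (-(1 : ℝ) / 2) *
    Real.exp (-((I : ℝ) * S * ρ) / (2 * (1 - ρ)))

/-- The candidate maximizer `ρ̂`. -/
noncomputable def rhoHat (I : ℕ) (S : ℝ) : ℝ :=
  (1 / 2) * (1 - S) * (1 + Real.sqrt (1 - 4 * S / (((I : ℝ) - 1) * (1 - S) ^ 2)))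

open Filter

/-- The logarithm of `chiFun`. -/
noncomputable def Ffun (I : ℕ) (S ρ : ℝ) : ℝ :=
  -(1/2) * Real.log (1 + ((I:ℝ)-1)*ρ) - (((I:ℝ)-1)/2) * Real.log (1-ρ)
    - (I*S*ρ)/(2*(1-ρ))

/-- The quadratic controlling the sign of the derivative of `Ffun`. -/
noncomputable def gq (I : ℕ) (S ρ : ℝ) : ℝ :=
  ((I:ℝ)-1)*ρ*(1-ρ) - S*(1+((I:ℝ)-1)*ρ)

lemma hacast {I : ℕ} (hI : 2 ≤ I) : (1:ℝ) ≤ (I:ℝ) - 1 := by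
  have : (2:ℝ) ≤ (I:ℝ) := by exact_mod_cast hI
  linarith

lemma chi_eq {I : ℕ} (S : ℝ) (hI : 2 ≤ I) {ρ : ℝ} (h0 : 0 ≤ ρ) (h1 : ρ < 1) :
    chiFun I S ρ = Real.exp (Ffun I S ρ) := by
  have ha := hacast hI
  have h1' : (0:ℝ) < 1 - ρ := by linarith
  have hb : (0:ℝ) < 1 + ((I:ℝ)-1)*ρ := by nlinarith
  have hB : (0:ℝ) < (1 + ((I:ℝ)-1)*ρ) * (1-ρ)^(I-1) := mul_pos hb (pow_pos h1' _)
  have hcast : ((I - 1 : ℕ) : ℝ) = (I:ℝ) - 1 := by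
    have h : 1 ≤ I := by omega
    push_cast [Nat.cast_sub h]
    ring
  rw [chiFun, Real.rpow_def_of_pos hB, Real.log_mul hb.ne' (pow_ne_zero _ h1'.ne'),
    Real.log_pow, ← Real.exp_add, Ffun, hcast]
  congr 1
  ring

lemma hasDerivAt_Ffun {I : ℕ} (S : ℝ) (hI : 2 ≤ I) {ρ : ℝ} (h0 : 0 ≤ ρ) (h1 : ρ < 1) :
    HasDerivAt (Ffun I S)
      ((I:ℝ) * gq I S ρ / (2*(1-ρ)^2*(1+((I:ℝ)-1)*ρ))) ρ := by
  have ha := hacast hI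
  have h1' : (0:ℝ) < 1 - ρ := by linarith
  have hb : (0:ℝ) < 1 + ((I:ℝ)-1)*ρ := by nlinarith
  have d1 : HasDerivAt (fun t : ℝ => 1 + ((I:ℝ)-1)*t) ((I:ℝ)-1) ρ := by
    simpa using ((hasDerivAt_id ρ).const_mul ((I:ℝ)-1)).const_add 1
  have d1l := d1.log hb.ne'
  have d2 : HasDerivAt (fun t : ℝ => 1 - t) (-1) ρ := by
    simpa using (hasDerivAt_id ρ).const_sub 1
  have d2l := d2.log h1'.ne'
  have d3n : HasDerivAt (fun t : ℝ => (I:ℝ)*S*t) ((I:ℝ)*S) ρ := by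
    simpa using (hasDerivAt_id ρ).const_mul ((I:ℝ)*S)
  have d3d : HasDerivAt (fun t : ℝ => 2*(1-t)) (-2) ρ := by
    simpa using d2.const_mul 2
  have hd0 : (2*(1-ρ)) ≠ 0 := by positivity
  have d3 := d3n.div d3d hd0
  have dF := ((d1l.const_mul (-(1/2))).sub (d2l.const_mul (((I:ℝ)-1)/2))).sub d3
  have hFeq : Ffun I S = fun t : ℝ =>
      -(1/2) * Real.log (1 + ((I:ℝ)-1)*t) - (((I:ℝ)-1)/2) * Real.log (1-t)
        - ((I:ℝ)*S*t)/(2*(1-t)) := rfl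
  rw [hFeq]
  refine dF.congr_deriv ?_
  rw [gq]
  field_simp
  ring

lemma Ffun_zero (I : ℕ) (S : ℝ) : Ffun I S 0 = 0 := by
  simp [Ffun]

lemma F_anti {I : ℕ} (S : ℝ) (hI : 2 ≤ I) {x y : ℝ} (hx : 0 ≤ x) (hy : y < 1)
    (hg : ∀ t ∈ Ioo x y, gq I S t ≤ 0) : AntitoneOn (Ffun I S) (Icc x y) := by
  have key : ∀ t ∈ Icc x y, 0 ≤ t ∧ t < 1 := fun t ht => ⟨hx.trans ht.1, lt_of_le_of_lt ht.2 hy⟩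
  have hint : interior (Icc x y) = Ioo x y := interior_Icc
  apply antitoneOn_of_deriv_nonpos (convex_Icc x y)
  · intro t ht
    exact (hasDerivAt_Ffun S hI (key t ht).1 (key t ht).2).continuousAt.continuousWithinAt
  · rw [hint]
    intro t ht
    have ht' := key t (Ioo_subset_Icc_self ht)
    exact (hasDerivAt_Ffun S hI ht'.1 ht'.2).differentiableAt.differentiableWithinAt
  · rw [hint]
    intro t ht
    have ht' := key t (Ioo_subset_Icc_self ht)
    rw [(hasDerivAt_Ffun S hI ht'.1 ht'.2).deriv]
    have ha := hacast hI
    have h1t : (0:ℝ) < 1 - t := by linarith [ht'.2]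
    have hbt : (0:ℝ) < 1 + ((I:ℝ)-1)*t := by nlinarith [ht'.1]
    have hden : (0:ℝ) < 2*(1-t)^2*(1+((I:ℝ)-1)*t) := by positivity
    have hnum : (I:ℝ) * gq I S t ≤ 0 :=
      mul_nonpos_of_nonneg_of_nonpos (by positivity) (hg t ht)
    exact div_nonpos_of_nonpos_of_nonneg hnum hden.le

lemma F_mono {I : ℕ} (S : ℝ) (hI : 2 ≤ I) {x y : ℝ} (hx : 0 ≤ x) (hy : y < 1)
    (hg : ∀ t ∈ Ioo x y, 0 ≤ gq I S t) : MonotoneOn (Ffun I S) (Icc x y) := by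
  have key : ∀ t ∈ Icc x y, 0 ≤ t ∧ t < 1 := fun t ht => ⟨hx.trans ht.1, lt_of_le_of_lt ht.2 hy⟩
  have hint : interior (Icc x y) = Ioo x y := interior_Icc
  apply monotoneOn_of_deriv_nonneg (convex_Icc x y)
  · intro t ht
    exact (hasDerivAt_Ffun S hI (key t ht).1 (key t ht).2).continuousAt.continuousWithinAt
  · rw [hint]
    intro t ht
    have ht' := key t (Ioo_subset_Icc_self ht)
    exact (hasDerivAt_Ffun S hI ht'.1 ht'.2).differentiableAt.differentiableWithinAt
  · rw [hint]
    intro t ht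
    have ht' := key t (Ioo_subset_Icc_self ht)
    rw [(hasDerivAt_Ffun S hI ht'.1 ht'.2).deriv]
    have ha := hacast hI
    have h1t : (0:ℝ) < 1 - t := by linarith [ht'.2]
    have hbt : (0:ℝ) < 1 + ((I:ℝ)-1)*t := by nlinarith [ht'.1]
    have hden : (0:ℝ) < 2*(1-t)^2*(1+((I:ℝ)-1)*t) := by positivity
    have hnum : 0 ≤ (I:ℝ) * gq I S t := mul_nonneg (by positivity) (hg t ht)
    positivity

lemma thresh_facts {I : ℕ} (hI : 2 ≤ I) :
    0 < (Real.sqrt I - 1)/(Real.sqrt I + 1) ∧ (Real.sqrt I - 1)/(Real.sqrt I + 1) < 1 ∧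
      ((I:ℝ)-1) * (1 - (Real.sqrt I - 1)/(Real.sqrt I + 1))^2
        = 4 * ((Real.sqrt I - 1)/(Real.sqrt I + 1)) := by
  have hI2 : (2:ℝ) ≤ (I:ℝ) := by exact_mod_cast hI
  have hq : Real.sqrt I ^ 2 = I := Real.sq_sqrt (by positivity)
  have h1 : (1:ℝ) < Real.sqrt I := by nlinarith [Real.sqrt_nonneg (I:ℝ)]
  refine ⟨div_pos (by linarith) (by linarith), (div_lt_one (by linarith)).mpr (by linarith), ?_⟩
  have hne : Real.sqrt I + 1 ≠ 0 := by linarith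
  field_simp
  nlinarith [hq]

lemma tendsto_chi {I : ℕ} (S : ℝ) (hI : 2 ≤ I) :
    Tendsto (chiFun I S) (nhdsWithin 0 (Ioo (0:ℝ) 1)) (nhds 1) := by
  have hF : ContinuousAt (Ffun I S) 0 := (hasDerivAt_Ffun S hI le_rfl one_pos).continuousAt
  have h2 : ContinuousAt (fun ρ => Real.exp (Ffun I S ρ)) 0 :=
    Real.continuous_exp.continuousAt.comp hF
  have h1 : Tendsto (fun ρ => Real.exp (Ffun I S ρ)) (nhdsWithin 0 (Ioo (0:ℝ) 1)) (nhds 1) := by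
    have := h2.continuousWithinAt (s := Ioo (0:ℝ) 1)
    simpa [ContinuousWithinAt, Ffun_zero] using this
  refine Filter.Tendsto.congr' ?_ h1
  filter_upwards [eventually_mem_nhdsWithin] with ρ hρ
  exact (chi_eq S hI hρ.1.le hρ.2).symm

lemma one_le_sSup_chi {I : ℕ} (S : ℝ) (hI : 2 ≤ I)
    (hbdd : BddAbove (chiFun I S '' Ioo (0:ℝ) 1)) :
    1 ≤ sSup (chiFun I S '' Ioo (0:ℝ) 1) := by
  haveI : (nhdsWithin (0:ℝ) (Ioo (0:ℝ) 1)).NeBot := by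
    apply mem_closure_iff_nhdsWithin_neBot.mp
    rw [closure_Ioo (by norm_num : (0:ℝ) ≠ 1)]
    exact ⟨le_rfl, by norm_num⟩
  refine le_of_tendsto (tendsto_chi S hI) ?_
  filter_upwards [eventually_mem_nhdsWithin] with ρ hρ
  exact le_csSup hbdd ⟨ρ, hρ, rfl⟩

theorem sup_chi_eq (I : ℕ) (hI : 2 ≤ I) (S : ℝ) (hS : 0 < S) :
    ((Real.sqrt I - 1) / (Real.sqrt I + 1) ≤ S →
      sSup (chiFun I S '' Ioo (0 : ℝ) 1) = 1) ∧
    (S < (Real.sqrt I - 1) / (Real.sqrt I + 1) →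
      rhoHat I S ∈ Ioo (0 : ℝ) 1 ∧
        sSup (chiFun I S '' Ioo (0 : ℝ) 1) = max (chiFun I S (rhoHat I S)) 1) := by
  obtain ⟨hT0, hT1, hTid⟩ := thresh_facts hI
  set T := (Real.sqrt I - 1)/(Real.sqrt I + 1) with hTdef
  have ha := hacast hI
  have hne : (chiFun I S '' Ioo (0:ℝ) 1).Nonempty :=
    ⟨chiFun I S (1/2), ⟨1/2, by norm_num, rfl⟩⟩
  constructor
  · -- case S ≥ T
    intro hT
    have hg : ∀ t ∈ Ioo (0:ℝ) 1, gq I S t ≤ 0 := by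
      intro t ht
      have hbt : (0:ℝ) ≤ 1 + ((I:ℝ)-1)*t := by nlinarith [ht.1.le]
      have hST : 0 ≤ (S - T) * (1 + ((I:ℝ)-1)*t) :=
        mul_nonneg (by linarith) hbt
      rw [gq]
      nlinarith [hST, mul_nonneg (by linarith : (0:ℝ) ≤ (I:ℝ)-1) (sq_nonneg (2*t - 1 + T)), hTid]
    have hub : ∀ x ∈ chiFun I S '' Ioo (0:ℝ) 1, x ≤ 1 := by
      rintro x ⟨ρ, hρ, rfl⟩
      have hA := F_anti S hI le_rfl hρ.2 (fun t ht => hg t ⟨ht.1, ht.2.trans hρ.2⟩)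
      have hle : Ffun I S ρ ≤ Ffun I S 0 :=
        hA ⟨le_rfl, hρ.1.le⟩ ⟨hρ.1.le, le_rfl⟩ hρ.1.le
      rw [chi_eq S hI hρ.1.le hρ.2]
      calc Real.exp (Ffun I S ρ) ≤ Real.exp (Ffun I S 0) := Real.exp_le_exp.mpr hle
        _ = 1 := by rw [Ffun_zero]; exact Real.exp_zero
    exact le_antisymm (csSup_le hne hub)
      (one_le_sSup_chi S hI ⟨1, fun x hx => hub x hx⟩)
  · -- case S < T
    intro hT
    have hS1 : S < 1 := hT.trans hT1
    have ha0 : ((I:ℝ)-1) ≠ 0 := by linarith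
    have h1S : (0:ℝ) < 1 - S := by linarith
    have hDpos : 0 < ((I:ℝ)-1)*(1-S)^2 - 4*S := by
      have hinner : (0:ℝ) < ((I:ℝ)-1)*(2-S-T) + 4 := by nlinarith
      nlinarith [hTid, mul_pos (sub_pos.mpr hT) hinner]
    have hden : (0:ℝ) < ((I:ℝ)-1)*(1-S)^2 := by positivity
    set r := Real.sqrt (1 - 4*S/(((I:ℝ)-1)*(1-S)^2)) with hrdef
    set ρ₁ := (1/2)*(1-S)*(1-r) with hρ₁def
    have hDval : (0:ℝ) < 1 - 4*S/(((I:ℝ)-1)*(1-S)^2) := by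
      rw [sub_pos, div_lt_one hden]; linarith
    have hr2 : r^2 = 1 - 4*S/(((I:ℝ)-1)*(1-S)^2) := Real.sq_sqrt hDval.le
    have hr0 : 0 < r := Real.sqrt_pos.mpr hDval
    have hr1 : r < 1 := by
      nlinarith [hr2, Real.sqrt_nonneg (1 - 4*S/(((I:ℝ)-1)*(1-S)^2)),
        (by positivity : (0:ℝ) < 4*S/(((I:ℝ)-1)*(1-S)^2))]
    have hhat : rhoHat I S = (1/2)*(1-S)*(1+r) := rfl
    have hhat0 : 0 < rhoHat I S := by
      rw [hhat]; apply mul_pos (mul_pos (by norm_num) h1S) (by linarith)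
    have hhat1 : rhoHat I S < 1 := by
      rw [hhat]
      nlinarith [mul_pos h1S (sub_pos.mpr hr1)]
    have hρ₁0 : 0 < ρ₁ := by
      rw [hρ₁def]; apply mul_pos (mul_pos (by norm_num) h1S) (by linarith)
    have hρ₁hat : ρ₁ < rhoHat I S := by
      rw [hhat, hρ₁def]; nlinarith [mul_pos h1S hr0]
    have hsum : ρ₁ + rhoHat I S = 1 - S := by rw [hhat, hρ₁def]; ring
    have hprod : ((I:ℝ)-1) * (ρ₁ * rhoHat I S) = S := by
      have e : ρ₁ * rhoHat I S = (1-S)^2/4 * (1 - r^2) := by rw [hhat, hρ₁def]; ring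
      rw [e, hr2]
      field_simp
      ring
    have gfact : ∀ t : ℝ, gq I S t = -(((I:ℝ)-1)) * (t - ρ₁) * (t - rhoHat I S) := by
      intro t
      rw [gq]
      linear_combination (-(((I:ℝ)-1)*t)) * hsum + hprod
    refine ⟨⟨hhat0, hhat1⟩, ?_⟩
    have hub : ∀ ρ ∈ Ioo (0:ℝ) 1, chiFun I S ρ ≤ max (chiFun I S (rhoHat I S)) 1 := by
      intro ρ hρ
      rw [chi_eq S hI hρ.1.le hρ.2,
        show chiFun I S (rhoHat I S) = Real.exp (Ffun I S (rhoHat I S)) from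
          chi_eq S hI hhat0.le hhat1]
      rcases le_or_gt ρ ρ₁ with h|h
      · -- antitone on [0, ρ₁]
        have hg : ∀ t ∈ Ioo (0:ℝ) ρ₁, gq I S t ≤ 0 := by
          intro t ht
          rw [gfact]
          nlinarith [mul_pos (sub_pos.mpr ht.2) (sub_pos.mpr (ht.2.trans hρ₁hat))]
        have hA := F_anti S hI le_rfl (hρ₁hat.trans hhat1) hg
        have hle : Ffun I S ρ ≤ Ffun I S 0 :=
          hA ⟨le_rfl, hρ₁0.le⟩ ⟨hρ.1.le, h⟩ hρ.1.le
        refine le_trans ?_ (le_max_right _ _)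
        calc Real.exp (Ffun I S ρ) ≤ Real.exp (Ffun I S 0) := Real.exp_le_exp.mpr hle
          _ = 1 := by rw [Ffun_zero]; exact Real.exp_zero
      · rcases le_or_gt ρ (rhoHat I S) with h2|h2
        · -- monotone on [ρ₁, ρ̂]
          have hg : ∀ t ∈ Ioo ρ₁ (rhoHat I S), 0 ≤ gq I S t := by
            intro t ht
            rw [gfact]
            nlinarith [mul_pos (sub_pos.mpr ht.1) (sub_pos.mpr ht.2)]
          have hM := F_mono S hI hρ₁0.le hhat1 hg
          have hle : Ffun I S ρ ≤ Ffun I S (rhoHat I S) :=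
            hM ⟨h.le, h2⟩ ⟨hρ₁hat.le, le_rfl⟩ h2
          exact le_trans (Real.exp_le_exp.mpr hle) (le_max_left _ _)
        · -- antitone on [ρ̂, ρ]
          have hg : ∀ t ∈ Ioo (rhoHat I S) ρ, gq I S t ≤ 0 := by
            intro t ht
            rw [gfact]
            nlinarith [mul_pos (sub_pos.mpr (hρ₁hat.trans ht.1)) (sub_pos.mpr ht.1)]
          have hA := F_anti S hI hhat0.le hρ.2 hg
          have hle : Ffun I S ρ ≤ Ffun I S (rhoHat I S) :=
            hA ⟨le_rfl, h2.le⟩ ⟨h2.le, le_rfl⟩ h2.le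
          exact le_trans (Real.exp_le_exp.mpr hle) (le_max_left _ _)
    have hbdd : BddAbove (chiFun I S '' Ioo (0:ℝ) 1) := by
      refine ⟨max (chiFun I S (rhoHat I S)) 1, ?_⟩
      rintro x ⟨ρ, hρ, rfl⟩
      exact hub ρ hρ
    refine le_antisymm (csSup_le hne ?_) ?_
    · rintro x ⟨ρ, hρ, rfl⟩
      exact hub ρ hρ
    · exact max_le (le_csSup hbdd ⟨rhoHat I S, ⟨hhat0, hhat1⟩, rfl⟩)
        (one_le_sSup_chi S hI hbdd)
end

section
/- Fix integers K ≥ 1 and 0 = L_0 < L_1 < ⋯ < L_K = I, real data x_1,…,x_I, and 0 ≤ ρ < 1. Define Q : ℝ^K → ℝ by Q(ν_1,…,ν_K) = (1/(1−ρ))·Σ_{k=1}^K Σ_{i=L_{k−1}+1}^{L_k} (x_i−ν_k)² − (ρ/((1+(I−1)ρ)(1−ρ)))·( Σ_{k=1}^K Σ_{i=L_{k−1}+1}^{L_k} (x_i−ν_k) )². Then Q attains its infimum over ℝ^K at ν_k = x̄_k := (1/(L_k−L_{k−1}))·Σ_{i=L_{k−1}+1}^{L_k} x_i for k = 1,…,K.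 -/
open Finset

/-- The (scaled) negative exponent `Q(ν)` of the joint normal density of the `I = L_K`
ANOVA cell averages under the equicorrelation-`ρ` fabrication model, with `K` groups of
cells, group `k` consisting of cells `L_{k-1}+1,…,L_k` with common mean `ν_k`. -/
noncomputable def Qform (K : ℕ) (L : Fin (K + 1) → ℕ) (x : ℕ → ℝ) (ρ : ℝ)
    (ν : Fin K → ℝ) : ℝ :=
  (1 / (1 - ρ)) *
      ∑ k : Fin K, ∑ i ∈ Finset.Ioc (L k.castSucc) (L k.succ), (x i - ν k) ^ 2 -
    (ρ / ((1 + ((L (Fin.last K) : ℝ) - 1) * ρ) * (1 - ρ))) *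
      (∑ k : Fin K, ∑ i ∈ Finset.Ioc (L k.castSucc) (L k.succ), (x i - ν k)) ^ 2

/-- `Q` attains its infimum over `ℝ^K` at the vector of group averages `x̄_k`. -/
theorem Q_attains_min_at_group_means (K : ℕ) (hK : 1 ≤ K) (L : Fin (K + 1) → ℕ)
    (hL0 : L 0 = 0) (hLmono : StrictMono L) (x : ℕ → ℝ) (ρ : ℝ) (hρ0 : 0 ≤ ρ)
    (hρ1 : ρ < 1) :
    ∀ ν : Fin K → ℝ,
      Qform K L x ρ (fun k =>
          (∑ i ∈ Finset.Ioc (L k.castSucc) (L k.succ), x i) /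
            (L k.succ - L k.castSucc : ℕ)) ≤ Qform K L x ρ ν := by
  intro ν
  have hlt : ∀ k : Fin K, L k.castSucc < L k.succ :=
    fun k => hLmono (Fin.castSucc_lt_succ : k.castSucc < k.succ)
  set n : Fin K → ℝ := fun k => ((L k.succ - L k.castSucc : ℕ) : ℝ) with hn
  have hnpos : ∀ k, 0 < n k := by
    intro k
    have h := hlt k
    simp only [hn]
    have : 0 < L k.succ - L k.castSucc := Nat.sub_pos_of_lt h
    exact_mod_cast this
  set S : Fin K → ℝ := fun k => ∑ i ∈ Finset.Ioc (L k.castSucc) (L k.succ), x i with hS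
  set m : Fin K → ℝ := fun k => S k / n k with hm
  have hnm : ∀ k, n k * m k = S k := by
    intro k
    simp only [hm]
    rw [mul_comm, div_mul_cancel₀ (S k) (hnpos k).ne']
  have hcard : ∀ k : Fin K, ((Finset.Ioc (L k.castSucc) (L k.succ)).card : ℝ) = n k := by
    intro k; simp [hn, Nat.card_Ioc]
  set d : Fin K → ℝ := fun k => m k - ν k with hd
  have hsum1 : ∀ (k : Fin K) (c : ℝ),
      ∑ i ∈ Finset.Ioc (L k.castSucc) (L k.succ), (x i - c) = S k - n k * c := by
    intro k c
    rw [Finset.sum_sub_distrib, Finset.sum_const, nsmul_eq_mul, hcard k, hS]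
  have h0 : ∀ k, ∑ i ∈ Finset.Ioc (L k.castSucc) (L k.succ), (x i - m k) = 0 := by
    intro k
    rw [hsum1 k (m k), hnm k]
    ring
  have h1 : ∀ k, ∑ i ∈ Finset.Ioc (L k.castSucc) (L k.succ), (x i - ν k) = n k * d k := by
    intro k
    rw [hsum1 k (ν k)]
    simp only [hd]
    linear_combination -hnm k
  have h2 : ∀ k, ∑ i ∈ Finset.Ioc (L k.castSucc) (L k.succ), (x i - ν k) ^ 2
      = (∑ i ∈ Finset.Ioc (L k.castSucc) (L k.succ), (x i - m k) ^ 2) + n k * d k ^ 2 := by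
    intro k
    have hpt : ∀ i, (x i - ν k) ^ 2
        = (x i - m k) ^ 2 + (2 * d k * (x i - m k) + d k ^ 2) := by
      intro i; simp only [hd]; ring
    rw [Finset.sum_congr rfl fun i _ => hpt i, Finset.sum_add_distrib,
        Finset.sum_add_distrib, ← Finset.mul_sum, h0 k, Finset.sum_const,
        nsmul_eq_mul, hcard k]
    ring
  set A : ℝ := ∑ k : Fin K, ∑ i ∈ Finset.Ioc (L k.castSucc) (L k.succ), (x i - m k) ^ 2 with hA
  set T1 : ℝ := ∑ k : Fin K, n k * d k with hT1
  set T2 : ℝ := ∑ k : Fin K, n k * d k ^ 2 with hT2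
  set I' : ℝ := (L (Fin.last K) : ℝ) with hI'
  -- sum of group sizes equals I'
  have hSn : ∑ k : Fin K, n k = I' := by
    set f : ℕ → ℝ := fun i => (L ⟨min i K, by omega⟩ : ℝ) with hf
    have hfk : ∀ k : Fin K, n k = f (k.val + 1) - f k.val := by
      intro k
      have hk := k.isLt
      have e1 : f (k.val + 1) = (L k.succ : ℝ) := by
        simp only [hf]
        congr 2
        ext
        simp only [Fin.val_succ]
        omega
      have e2 : f k.val = (L k.castSucc : ℝ) := by
        simp only [hf]
        congr 2
        ext
        simp only [Fin.coe_castSucc]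
        omega
      rw [e1, e2]
      simp only [hn]
      rw [Nat.cast_sub (hlt k).le]
    rw [Finset.sum_congr rfl fun k _ => hfk k]
    rw [Fin.sum_univ_eq_sum_range (fun i => f (i + 1) - f i) K]
    rw [Finset.sum_range_sub f K]
    have eK : f K = I' := by
      simp only [hf, hI']
      congr 2
      ext
      simp
    have e0 : f 0 = 0 := by
      simp only [hf]
      have : (⟨min 0 K, by omega⟩ : Fin (K + 1)) = 0 := by ext; simp
      rw [this, hL0]
      simp
    rw [eK, e0, sub_zero]
  have hI1 : (1 : ℝ) ≤ I' := by
    have h0lt : (0 : Fin (K + 1)) < Fin.last K := by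
      rw [Fin.lt_iff_val_lt_val]
      simp [Fin.last]
      omega
    have := hLmono h0lt
    rw [hL0] at this
    rw [hI']
    exact_mod_cast this
  have hT2nn : 0 ≤ T2 := by
    rw [hT2]
    exact Finset.sum_nonneg fun k _ => mul_nonneg (hnpos k).le (sq_nonneg _)
  -- Cauchy–Schwarz
  have hCS : T1 ^ 2 ≤ I' * T2 := by
    have h := Finset.sum_mul_sq_le_sq_mul_sq Finset.univ
      (fun k : Fin K => Real.sqrt (n k)) (fun k => Real.sqrt (n k) * d k)
    have e1 : ∑ k : Fin K, Real.sqrt (n k) * (Real.sqrt (n k) * d k) = T1 := by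
      rw [hT1]
      refine Finset.sum_congr rfl fun k _ => ?_
      rw [← mul_assoc, Real.mul_self_sqrt (hnpos k).le]
    have e2 : ∑ k : Fin K, Real.sqrt (n k) ^ 2 = I' := by
      rw [← hSn]
      exact Finset.sum_congr rfl fun k _ => Real.sq_sqrt (hnpos k).le
    have e3 : ∑ k : Fin K, (Real.sqrt (n k) * d k) ^ 2 = T2 := by
      rw [hT2]
      refine Finset.sum_congr rfl fun k _ => ?_
      rw [mul_pow, Real.sq_sqrt (hnpos k).le]
    rw [e1, e2, e3] at h
    exact h
  have h1ρ : (0 : ℝ) < 1 - ρ := by linarith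
  have hcpos : (0 : ℝ) < 1 + (I' - 1) * ρ := by nlinarith
  have key : (ρ / ((1 + (I' - 1) * ρ) * (1 - ρ))) * T1 ^ 2 ≤ (1 / (1 - ρ)) * T2 := by
    rw [div_mul_eq_mul_div, div_mul_eq_mul_div,
        div_le_div_iff₀ (by positivity) h1ρ]
    nlinarith [mul_le_mul_of_nonneg_left hCS hρ0, mul_nonneg hρ0 hT2nn,
      mul_nonneg hT2nn h1ρ.le, mul_le_mul_of_nonneg_right
        (mul_le_mul_of_nonneg_left hCS hρ0) h1ρ.le,
      mul_nonneg (mul_nonneg hT2nn h1ρ.le) h1ρ.le]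
  have em : Qform K L x ρ m = (1 / (1 - ρ)) * A := by
    simp only [Qform]
    have hz : (∑ k : Fin K, ∑ i ∈ Finset.Ioc (L k.castSucc) (L k.succ), (x i - m k)) = 0 := by
      rw [Finset.sum_congr rfl fun k _ => h0 k, Finset.sum_const, smul_zero]
    rw [hz, ← hA, ← hI']
    ring
  have eν : Qform K L x ρ ν = (1 / (1 - ρ)) * (A + T2)
      - (ρ / ((1 + (I' - 1) * ρ) * (1 - ρ))) * T1 ^ 2 := by
    simp only [Qform]
    rw [Finset.sum_congr rfl fun k _ => h2 k, Finset.sum_congr rfl fun k _ => h1 k,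
        Finset.sum_add_distrib, ← hA, ← hT1, ← hT2, ← hI']
  rw [em, eν]
  have expand : (1 / (1 - ρ)) * (A + T2) = (1 / (1 - ρ)) * A + (1 / (1 - ρ)) * T2 := by
    ring
  linarith [key]
end
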